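/- Let θ, D, M > 0 and let i, N be natural numbers with 1 ≤ i ≤ N. Let K_n ≥ 0 for i ≤ n ≤ N and define step sizes t_n := θD/√(M n). Then (4D² + Σ_{n=i}^N [8 t_n K_n D² + t_n² M + 2 t_n K_n]) / (2 Σ_{n=i}^N t_n) ≤ (1/√N) · [ 2 D √M · N/(θ(N−i+1)) + ((4D²+1)·N/(N−i+1)) · Σ_{n=i}^N K_n/√n + θ D √M · N/(2i) ]. -/

import Mathlib

/-- Variable-step-size estimate (3.13) with t_n = θD/√(Mn). -/
theorem stmt_12 (θ D M : ℝ) (hθ : 0 < θ) (hD : 0 < D) (hM : 0 < M)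
    (i N : ℕ) (hi : 1 ≤ i) (hiN : i ≤ N)
    (K : ℕ → ℝ) (hK : ∀ n : ℕ, i ≤ n → n ≤ N → 0 ≤ K n)
    (t : ℕ → ℝ) (ht : ∀ n : ℕ, t n = θ * D / Real.sqrt (M * n)) :
    (4 * D ^ 2 + ∑ n ∈ Finset.Icc i N,
        (8 * t n * K n * D ^ 2 + (t n) ^ 2 * M + 2 * t n * K n))
      / (2 * ∑ n ∈ Finset.Icc i N, t n)
    ≤ (1 / Real.sqrt N) *
        (2 * D * Real.sqrt M * N / (θ * ((N : ℝ) - i + 1))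
          + ((4 * D ^ 2 + 1) * N / ((N : ℝ) - i + 1))
              * ∑ n ∈ Finset.Icc i N, K n / Real.sqrt n
          + θ * D * Real.sqrt M * N / (2 * i)) := by
  have hN1 : (1:ℕ) ≤ N := le_trans hi hiN
  have hNpos : (0:ℝ) < N := by exact_mod_cast hN1
  have hipos : (0:ℝ) < i := by exact_mod_cast hi
  have hiN' : (i:ℝ) ≤ N := by exact_mod_cast hiN
  set sN := Real.sqrt (N:ℝ) with hsN
  set sM := Real.sqrt M with hsM
  have hsNpos : 0 < sN := Real.sqrt_pos.mpr hNpos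
  have hsMpos : 0 < sM := Real.sqrt_pos.mpr hM
  have hsN2 : sN * sN = (N:ℝ) := Real.mul_self_sqrt hNpos.le
  have hsM2 : sM * sM = M := Real.mul_self_sqrt hM.le
  set c : ℝ := (N:ℝ) - i + 1 with hc
  have hcpos : 0 < c := by rw [hc]; linarith
  set e := θ * D / sM with he
  have hepos : 0 < e := by positivity
  set a := ∑ n ∈ Finset.Icc i N, 1 / Real.sqrt (n:ℝ) with ha
  set kq := ∑ n ∈ Finset.Icc i N, K n / Real.sqrt (n:ℝ) with hkq
  set h := ∑ n ∈ Finset.Icc i N, (1:ℝ) / (n:ℝ) with hh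
  -- cardinality
  have hcard : ((Finset.Icc i N).card : ℝ) = c := by
    rw [Nat.card_Icc, hc]
    have : i ≤ N + 1 := by omega
    push_cast [this]
    ring
  -- per-element facts
  have hmem : ∀ n ∈ Finset.Icc i N, (0:ℝ) < n ∧ 0 < Real.sqrt (n:ℝ) ∧ Real.sqrt (n:ℝ) ≤ sN
      ∧ (i:ℝ) ≤ n := by
    intro n hn
    rw [Finset.mem_Icc] at hn
    have h1 : (0:ℝ) < n := by
      have : 1 ≤ n := le_trans hi hn.1
      exact_mod_cast this
    have h4 : (i:ℝ) ≤ n := by exact_mod_cast hn.1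
    have h3 : Real.sqrt (n:ℝ) ≤ sN := by
      apply Real.sqrt_le_sqrt
      exact_mod_cast hn.2
    exact ⟨h1, Real.sqrt_pos.mpr h1, h3, h4⟩
  -- key form of t
  have hkey : ∀ n ∈ Finset.Icc i N, t n = e * (1 / Real.sqrt (n:ℝ)) := by
    intro n hn
    rw [ht, Real.sqrt_mul hM.le, he, ← hsM]
    ring
  -- sum rewrites
  have hS : ∑ n ∈ Finset.Icc i N, t n = e * a := by
    rw [ha, Finset.mul_sum]
    exact Finset.sum_congr rfl fun n hn => by rw [hkey n hn]
  have hnum : ∑ n ∈ Finset.Icc i N,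
      (8 * t n * K n * D ^ 2 + (t n) ^ 2 * M + 2 * t n * K n)
      = (8 * D ^ 2 + 2) * e * kq + e ^ 2 * M * h := by
    rw [hkq, hh, Finset.mul_sum, Finset.mul_sum, ← Finset.sum_add_distrib]
    apply Finset.sum_congr rfl
    intro n hn
    obtain ⟨h1, h2, _, _⟩ := hmem n hn
    have hinv : (Real.sqrt (n:ℝ))⁻¹ * (Real.sqrt (n:ℝ))⁻¹ = ((n:ℝ))⁻¹ := by
      rw [← mul_inv, Real.mul_self_sqrt h1.le]
    rw [hkey n hn, one_div ((n:ℝ)), ← hinv]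
    ring
  -- inequalities on the elementary sums
  have ha_lb : c / sN ≤ a := by
    have : ∑ n ∈ Finset.Icc i N, (1 / sN) ≤ a := by
      apply Finset.sum_le_sum
      intro n hn
      obtain ⟨_, h2, h3, _⟩ := hmem n hn
      exact one_div_le_one_div_of_le h2 h3
    calc c / sN = ((Finset.Icc i N).card : ℝ) * (1 / sN) := by
          rw [hcard]; ring
      _ = ∑ n ∈ Finset.Icc i N, (1 / sN) := by
          rw [Finset.sum_const, nsmul_eq_mul]
      _ ≤ a := this
  have hh_ub : h ≤ c / i := by
    have : h ≤ ∑ n ∈ Finset.Icc i N, (1 / (i:ℝ)) := by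
      apply Finset.sum_le_sum
      intro n hn
      obtain ⟨h1, _, _, h4⟩ := hmem n hn
      exact one_div_le_one_div_of_le hipos h4
    calc h ≤ ∑ n ∈ Finset.Icc i N, (1 / (i:ℝ)) := this
      _ = ((Finset.Icc i N).card : ℝ) * (1 / i) := by
          rw [Finset.sum_const, nsmul_eq_mul]
      _ = c / i := by rw [hcard]; ring
  have hkq0 : 0 ≤ kq := by
    apply Finset.sum_nonneg
    intro n hn
    rw [Finset.mem_Icc] at hn
    exact div_nonneg (hK n hn.1 hn.2) (Real.sqrt_nonneg _)
  have hapos : 0 < a := lt_of_lt_of_le (by positivity) ha_lb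
  -- main chain
  calc (4 * D ^ 2 + ∑ n ∈ Finset.Icc i N,
        (8 * t n * K n * D ^ 2 + (t n) ^ 2 * M + 2 * t n * K n))
      / (2 * ∑ n ∈ Finset.Icc i N, t n)
      = (4 * D ^ 2 + ((8 * D ^ 2 + 2) * e * kq + e ^ 2 * M * h)) / (2 * (e * a)) := by
        rw [hS, hnum]
    _ ≤ (4 * D ^ 2 + ((8 * D ^ 2 + 2) * e * kq + e ^ 2 * M * (c / i))) / (2 * (e * (c / sN))) := by
        apply div_le_div₀
        · have h1 : 0 ≤ (8 * D ^ 2 + 2) * e * kq :=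
            mul_nonneg (by positivity) hkq0
          have h2 : 0 ≤ e ^ 2 * M * (c / i) := by positivity
          have h0 : (0:ℝ) ≤ 4 * D ^ 2 := by positivity
          linarith
        · have : e ^ 2 * M * h ≤ e ^ 2 * M * (c / i) :=
            mul_le_mul_of_nonneg_left hh_ub (by positivity)
          linarith
        · positivity
        · have : e * (c / sN) ≤ e * a := mul_le_mul_of_nonneg_left ha_lb hepos.le
          linarith
    _ = (1 / sN) *
        (2 * D * sM * N / (θ * c)
          + ((4 * D ^ 2 + 1) * N / c) * kq
          + θ * D * sM * N / (2 * i)) := by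
        rw [← hsN2, ← hsM2, he]
        field_simp
        ring
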